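/- Let n ≥ 2 be an integer, let r : (−T, T) → ℝ be a maximal n-catenoid profile function, and for c ≥ 0 let z₁(c) < 0 < z₂(c) denote the two solutions of z·r'(z − c) = r(z − c). Define f_i(c) = z_i(c)² + r(z_i(c) − c)² for i = 1, 2. Then each f_i is differentiable on (0, ∞) (and one-sidedly at 0) with f_i'(c) = (2 z_i(c) / (n−1)) · (n − r(z_i(c) − c)^(2n−2)). -/

import Mathlib

open Set Filter ContinuousLinearMap

/-- A maximal `n`-catenoid profile function: a twice differentiable positive function
`r` on the interval `(-T, T)` (where `0 < T ≤ ∞`, encoded via `T : EReal`) with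
`r 0 = 1`, `r' 0 = 0`, satisfying the catenoid ODE `r·r'' − (n−1)(1 + r'²) = 0`,
and with `r z → ∞` as `z → ±T`. -/
def IsMaxCatenoidProfile (n : ℕ) (T : EReal) (r : ℝ → ℝ) : Prop :=
  0 < T ∧
  (∀ z : ℝ, (z : EReal) ∈ Set.Ioo (-T) T → 0 < r z) ∧
  (∀ z : ℝ, (z : EReal) ∈ Set.Ioo (-T) T →
    DifferentiableAt ℝ r z ∧ DifferentiableAt ℝ (deriv r) z) ∧
  r 0 = 1 ∧ deriv r 0 = 0 ∧
  (∀ z : ℝ, (z : EReal) ∈ Set.Ioo (-T) T →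
    r z * deriv (deriv r) z - ((n : ℝ) - 1) * (1 + (deriv r z) ^ 2) = 0) ∧
  Filter.Tendsto r
    (Filter.comap (fun z : ℝ => (z : EReal)) (nhdsWithin T (Set.Iio T))) Filter.atTop ∧
  Filter.Tendsto r
    (Filter.comap (fun z : ℝ => (z : EReal)) (nhdsWithin (-T) (Set.Ioi (-T)))) Filter.atTop

def CatDom (T : EReal) : Set ℝ := {x : ℝ | (x : EReal) ∈ Set.Ioo (-T) T}

lemma isOpen_catDom {T : EReal} : IsOpen (CatDom T) :=
  isOpen_Ioo.preimage continuous_coe_real_ereal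

lemma icc_subset_catDom {T : EReal} {a b : ℝ} (ha : a ∈ CatDom T) (hb : b ∈ CatDom T) :
    Set.Icc a b ⊆ CatDom T := by
  intro y hy
  exact ⟨lt_of_lt_of_le ha.1 (EReal.coe_le_coe_iff.2 hy.1),
    lt_of_le_of_lt (EReal.coe_le_coe_iff.2 hy.2) hb.2⟩

lemma zero_mem_catDom {T : EReal} (hT : 0 < T) : (0 : ℝ) ∈ CatDom T := by
  constructor
  · show -T < ((0:ℝ) : EReal)
    rw [EReal.coe_zero, ← neg_zero]
    exact EReal.neg_lt_neg_iff.2 hT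
  · show ((0:ℝ) : EReal) < T
    rw [EReal.coe_zero]; exact hT

lemma cat_first_integral {n : ℕ} {T : EReal} {r : ℝ → ℝ} (hn : 2 ≤ n)
    (hr : IsMaxCatenoidProfile n T r) :
    ∀ x ∈ CatDom T, 1 + deriv r x ^ 2 = r x ^ (2 * n - 2) := by
  obtain ⟨hT, hpos, hdiff, hr0, hr'0, hode, -, -⟩ := hr
  have h0S : (0:ℝ) ∈ CatDom T := zero_mem_catDom hT
  set Φ : ℝ → ℝ := fun x => (1 + deriv r x ^ 2) / r x ^ (2 * n - 2) with hΦdef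
  have hD : ∀ x ∈ CatDom T, HasDerivAt Φ 0 x := by
    intro x hx
    have hrx : 0 < r x := hpos x hx
    have hden : r x ^ (2 * n - 2) ≠ 0 := pow_ne_zero _ hrx.ne'
    have hN := (hasDerivAt_const x (1:ℝ)).add (((hdiff x hx).2.hasDerivAt).pow 2)
    have hDen := ((hdiff x hx).1.hasDerivAt).pow (2*n-2)
    have hdiv : HasDerivAt Φ _ x := hN.div hDen hden
    convert hdiv using 1
    rw [eq_comm, div_eq_zero_iff]
    left
    have hode' : r x * deriv (deriv r) x = ((n:ℝ)-1) * (1 + deriv r x ^ 2) := by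
      have := hode x hx; linarith
    have hsplit : r x ^ (2*n-2) = r x ^ (2*n-2-1) * r x := by
      rw [← pow_succ]; congr 1; omega
    have hcast : ((2*n-2 : ℕ) : ℝ) = 2 * ((n:ℝ) - 1) := by
      have h2 : (2:ℕ) ≤ 2*n := by omega
      push_cast [Nat.cast_sub h2]
      ring
    rw [hsplit, hcast]
    simp only [Pi.add_apply, Pi.pow_apply]
    linear_combination (2 * deriv r x * r x ^ (2*n-2-1)) * hode'
  have hΦ0 : Φ 0 = 1 := by simp [hΦdef, hr0, hr'0]
  have key : ∀ x ∈ CatDom T, Φ x = 1 := by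
    intro x hx
    rcases le_total 0 x with h | h
    · have hsub : Icc (0:ℝ) x ⊆ CatDom T := icc_subset_catDom h0S hx
      have := constant_of_has_deriv_right_zero
        (fun y hy => (hD y (hsub hy)).continuousAt.continuousWithinAt)
        (fun y hy => (hD y (hsub (Ico_subset_Icc_self hy))).hasDerivWithinAt)
        x (right_mem_Icc.2 h)
      rw [this, hΦ0]
    · have hsub : Icc x (0:ℝ) ⊆ CatDom T := icc_subset_catDom hx h0S
      have := constant_of_has_deriv_right_zero
        (fun y hy => (hD y (hsub hy)).continuousAt.continuousWithinAt)
        (fun y hy => (hD y (hsub (Ico_subset_Icc_self hy))).hasDerivWithinAt)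
        0 (right_mem_Icc.2 h)
      rw [← this, hΦ0]
  intro x hx
  have h1 := key x hx
  have hden : r x ^ (2 * n - 2) ≠ 0 := pow_ne_zero _ (hpos x hx).ne'
  simp only [hΦdef] at h1
  field_simp at h1
  linarith [h1]

lemma cat_contDiffOn {n : ℕ} {T : EReal} {r : ℝ → ℝ} (hr : IsMaxCatenoidProfile n T r) :
    ContDiffOn ℝ 1 r (CatDom T) ∧ ContDiffOn ℝ 1 (deriv r) (CatDom T) := by
  obtain ⟨hT, hpos, hdiff, hr0, hr'0, hode, -, -⟩ := hr
  set S := CatDom T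
  have hopen : IsOpen S := isOpen_catDom
  have hd1 : DifferentiableOn ℝ r S := fun x hx => ((hdiff x hx).1).differentiableWithinAt
  have hd2 : DifferentiableOn ℝ (deriv r) S := fun x hx => ((hdiff x hx).2).differentiableWithinAt
  have hc2 : ContinuousOn (deriv (deriv r)) S := by
    have : ContinuousOn (fun x => ((n:ℝ) - 1) * (1 + deriv r x ^ 2) / r x) S := by
      apply ContinuousOn.div
      · exact (continuousOn_const.mul (continuousOn_const.add ((hd2.continuousOn).pow 2)))
      · exact hd1.continuousOn
      · exact fun x hx => (hpos x hx).ne'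
    apply this.congr
    intro x hx
    have h := hode x hx
    have hrx := (hpos x hx).ne'
    field_simp
    linarith
  constructor
  · rw [show (1 : WithTop ℕ∞) = 0 + 1 by norm_num, contDiffOn_succ_iff_deriv_of_isOpen hopen]
    exact ⟨hd1, by simp, contDiffOn_zero.2 hd2.continuousOn⟩
  · rw [show (1 : WithTop ℕ∞) = 0 + 1 by norm_num, contDiffOn_succ_iff_deriv_of_isOpen hopen]
    exact ⟨hd2, by simp, contDiffOn_zero.2 hc2⟩

noncomputable def mkEquiv (a b : ℝ) (hb : b ≠ 0) : (ℝ × ℝ) ≃L[ℝ] (ℝ × ℝ) :=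
  (LinearEquiv.ofLinear
    ((LinearMap.fst ℝ ℝ ℝ).prod (a • LinearMap.fst ℝ ℝ ℝ + b • LinearMap.snd ℝ ℝ ℝ))
    ((LinearMap.fst ℝ ℝ ℝ).prod (b⁻¹ • (LinearMap.snd ℝ ℝ ℝ - a • LinearMap.fst ℝ ℝ ℝ)))
    (by
      apply LinearMap.ext
      rintro ⟨x, y⟩
      simp only [LinearMap.coe_comp, Function.comp_apply, LinearMap.prod_apply, Function.prod,
        LinearMap.smul_apply, LinearMap.add_apply, LinearMap.sub_apply, LinearMap.fst_apply,
        LinearMap.snd_apply, smul_eq_mul, LinearMap.id_apply]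
      refine Prod.ext rfl ?_
      field_simp
      ring)
    (by
      apply LinearMap.ext
      rintro ⟨x, y⟩
      simp only [LinearMap.coe_comp, Function.comp_apply, LinearMap.prod_apply, Function.prod,
        LinearMap.smul_apply, LinearMap.add_apply, LinearMap.sub_apply, LinearMap.fst_apply,
        LinearMap.snd_apply, smul_eq_mul, LinearMap.id_apply]
      refine Prod.ext rfl ?_
      field_simp
      ring)).toContinuousLinearEquiv

lemma mkEquiv_apply (a b : ℝ) (hb : b ≠ 0) (p : ℝ × ℝ) :
    mkEquiv a b hb p = (p.1, a * p.1 + b * p.2) := by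
  simp [mkEquiv, LinearEquiv.coe_toContinuousLinearEquiv', LinearEquiv.ofLinear_apply]

lemma cat_key {n : ℕ} {T : EReal} {r : ℝ → ℝ} (hn : 2 ≤ n)
    (hr : IsMaxCatenoidProfile n T r)
    (s : ℝ) (z : ℝ → ℝ)
    (hdom : ∀ c : ℝ, 0 ≤ c → z c - c ∈ CatDom T)
    (hsign : ∀ c : ℝ, 0 ≤ c → 0 < s * z c)
    (heq : ∀ c : ℝ, 0 ≤ c → z c * deriv r (z c - c) = r (z c - c))
    (hsel : ∀ c : ℝ, 0 ≤ c → ∀ y : ℝ, y - c ∈ CatDom T →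
      y * deriv r (y - c) = r (y - c) → 0 < s * y → y = z c)
    (c₀ : ℝ) (hc₀ : 0 ≤ c₀) :
    HasDerivWithinAt (fun c => z c ^ 2 + r (z c - c) ^ 2)
      (2 * z c₀ / ((n : ℝ) - 1) * ((n : ℝ) - r (z c₀ - c₀) ^ (2 * n - 2))) (Set.Ici 0) c₀ ∧
    (0 < c₀ → HasDerivAt (fun c => z c ^ 2 + r (z c - c) ^ 2)
      (2 * z c₀ / ((n : ℝ) - 1) * ((n : ℝ) - r (z c₀ - c₀) ^ (2 * n - 2))) c₀) := by
  obtain ⟨hcd1, hcd2⟩ := cat_contDiffOn hr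
  have hfi := cat_first_integral hn hr
  obtain ⟨hT, hpos, hdiff, hr0, hr'0, hode, -, -⟩ := hr
  set w₀ : ℝ := z c₀ - c₀ with hw₀def
  set z₀ : ℝ := z c₀ with hz₀def
  have hw : w₀ ∈ CatDom T := hdom c₀ hc₀
  set R : ℝ := r w₀ with hRdef
  set R' : ℝ := deriv r w₀ with hR'def
  set R'' : ℝ := deriv (deriv r) w₀ with hR''def
  have hRpos : 0 < R := hpos w₀ hw
  have hode₀ : R * R'' = ((n:ℝ) - 1) * (1 + R' ^ 2) := by
    have := hode w₀ hw; linarith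
  have hn1pos : (0:ℝ) < (n:ℝ) - 1 := by
    have : (2:ℝ) ≤ (n:ℝ) := by exact_mod_cast hn
    linarith
  have hR''pos : 0 < R'' := by
    have h1 : 0 < ((n:ℝ) - 1) * (1 + R' ^ 2) := by positivity
    rw [← hode₀] at h1
    by_contra h
    push_neg at h
    nlinarith
  have hz₀ne : z₀ ≠ 0 := by
    intro h
    have := hsign c₀ hc₀
    rw [← hz₀def, h, mul_zero] at this
    exact lt_irrefl 0 this
  have hbne : z₀ * R'' ≠ 0 := mul_ne_zero hz₀ne hR''pos.ne'
  -- strict derivatives of r and deriv r at w₀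
  have hmem : CatDom T ∈ nhds w₀ := isOpen_catDom.mem_nhds hw
  have hsr : HasStrictDerivAt r R' w₀ :=
    (hcd1.contDiffAt hmem).hasStrictDerivAt' ((hdiff w₀ hw).1.hasDerivAt) one_ne_zero
  have hsr' : HasStrictDerivAt (deriv r) R'' w₀ :=
    (hcd2.contDiffAt hmem).hasStrictDerivAt' ((hdiff w₀ hw).2.hasDerivAt) one_ne_zero
  -- F and its strict derivative
  set F : ℝ × ℝ → ℝ := fun p => p.2 * deriv r (p.2 - p.1) - r (p.2 - p.1) with hFdef
  set p₀ : ℝ × ℝ := (c₀, z₀) with hp₀def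
  have hup₀ : (p₀.2 - p₀.1) = w₀ := by simp [hp₀def, hw₀def, hz₀def]
  have hu : HasStrictFDerivAt (fun p : ℝ × ℝ => p.2 - p.1)
      (snd ℝ ℝ ℝ - fst ℝ ℝ ℝ) p₀ := hasStrictFDerivAt_snd.sub hasStrictFDerivAt_fst
  have hg1 : HasStrictFDerivAt (fun p : ℝ × ℝ => deriv r (p.2 - p.1))
      (R'' • (snd ℝ ℝ ℝ - fst ℝ ℝ ℝ)) p₀ :=
    HasStrictDerivAt.comp_hasStrictFDerivAt_of_eq p₀ hsr' hu hup₀.symm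
  have hg2 : HasStrictFDerivAt (fun p : ℝ × ℝ => r (p.2 - p.1))
      (R' • (snd ℝ ℝ ℝ - fst ℝ ℝ ℝ)) p₀ :=
    HasStrictDerivAt.comp_hasStrictFDerivAt_of_eq p₀ hsr hu hup₀.symm
  have hF : HasStrictFDerivAt F
      (z₀ • (R'' • (snd ℝ ℝ ℝ - fst ℝ ℝ ℝ)) + deriv r w₀ • snd ℝ ℝ ℝ
        - R' • (snd ℝ ℝ ℝ - fst ℝ ℝ ℝ)) p₀ := by
    have := (hasStrictFDerivAt_snd.mul hg1).sub hg2
    exact this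
  set L₀ : (ℝ × ℝ) →L[ℝ] ℝ := z₀ • (R'' • (snd ℝ ℝ ℝ - fst ℝ ℝ ℝ)) + deriv r w₀ • snd ℝ ℝ ℝ
        - R' • (snd ℝ ℝ ℝ - fst ℝ ℝ ℝ) with hL₀def
  set a : ℝ := R' - z₀ * R'' with hadef
  set b : ℝ := z₀ * R'' with hbdef
  set e : (ℝ × ℝ) ≃L[ℝ] (ℝ × ℝ) := mkEquiv a b hbne with hedef
  have hL₀apply : ∀ q : ℝ × ℝ, L₀ q = a * q.1 + b * q.2 := by
    intro q
    simp [hL₀def, hadef, hbdef, ← hR'def]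
    ring
  set G : ℝ × ℝ → ℝ × ℝ := fun p => (p.1, F p) with hGdef
  have hGs : HasStrictFDerivAt G (e : (ℝ × ℝ) →L[ℝ] (ℝ × ℝ)) p₀ := by
    have h1 : HasStrictFDerivAt G ((fst ℝ ℝ ℝ).prod L₀) p₀ := HasStrictFDerivAt.prodMk hasStrictFDerivAt_fst hF
    have h2 : (e : (ℝ × ℝ) →L[ℝ] (ℝ × ℝ)) = (fst ℝ ℝ ℝ).prod L₀ := by
      apply ContinuousLinearMap.ext
      intro q
      have := mkEquiv_apply a b hbne q
      rw [hedef]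
      refine Prod.ext ?_ ?_
      · simpa using congrArg Prod.fst this
      · have h2 := congrArg Prod.snd this
        simp only at h2
        simp [h2, hL₀apply q]
    rw [h2]
    exact h1
  -- local inverse
  have hFp₀ : F p₀ = 0 := by
    rw [hFdef]
    simp only [hup₀, hp₀def]
    have := heq c₀ hc₀
    rw [← hz₀def, ← hw₀def] at this
    exact sub_eq_zero.2 this
  have hGp₀ : G p₀ = (c₀, 0) := by
    show (p₀.1, F p₀) = (c₀, 0)
    rw [hFp₀]
  set g : ℝ × ℝ → ℝ × ℝ := hGs.localInverse G e p₀ with hgdef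
  set φ : ℝ → ℝ := fun c => (g (c, 0)).2 with hφdef
  have hgp : g (c₀, 0) = p₀ := by
    rw [← hGp₀, hgdef]
    exact hGs.localInverse_apply_image
  have hφc₀ : φ c₀ = z₀ := by rw [hφdef]; simp [hgp, hp₀def]
  have htend : Tendsto (fun c : ℝ => ((c, 0) : ℝ × ℝ)) (nhds c₀) (nhds ((c₀, 0) : ℝ × ℝ)) := by
    have : Continuous (fun c : ℝ => ((c, 0) : ℝ × ℝ)) := continuous_id.prodMk continuous_const
    exact this.continuousAt
  have hev1 : ∀ᶠ c in nhds c₀, G (g (c, 0)) = (c, 0) := by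
    have := hGs.eventually_right_inverse
    rw [hGp₀] at this
    exact htend.eventually this
  have hev_sol : ∀ᶠ c in nhds c₀, φ c * deriv r (φ c - c) = r (φ c - c) := by
    filter_upwards [hev1] with c hc
    have h1 : (g (c, 0)).1 = c := congrArg Prod.fst hc
    have h2 : F (g (c, 0)) = 0 := congrArg Prod.snd hc
    simp only [hFdef, h1] at h2
    show (g (c, 0)).2 * deriv r ((g (c, 0)).2 - c) = r ((g (c, 0)).2 - c)
    linarith [h2]
  -- strict derivative of φ
  have hginv : HasStrictFDerivAt g ((e.symm : (ℝ × ℝ) →L[ℝ] (ℝ × ℝ))) (c₀, 0) := by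
    have := hGs.to_localInverse
    rwa [hGp₀] at this
  have hin : HasStrictFDerivAt (fun c : ℝ => ((c, 0) : ℝ × ℝ))
      ((ContinuousLinearMap.id ℝ ℝ).prod 0) c₀ :=
    hasStrictFDerivAt_id c₀ |>.prodMk (hasStrictFDerivAt_const (0:ℝ) c₀)
  have hφs : HasStrictFDerivAt φ
      ((snd ℝ ℝ ℝ).comp ((e.symm : (ℝ × ℝ) →L[ℝ] (ℝ × ℝ)).comp
        ((ContinuousLinearMap.id ℝ ℝ).prod 0))) c₀ := by
    exact hasStrictFDerivAt_snd.comp c₀ (hginv.comp c₀ hin)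
  set d : ℝ := ((snd ℝ ℝ ℝ).comp ((e.symm : (ℝ × ℝ) →L[ℝ] (ℝ × ℝ)).comp
        ((ContinuousLinearMap.id ℝ ℝ).prod 0))) 1 with hddef
  have hφd : HasDerivAt φ d c₀ := hφs.hasStrictDerivAt.hasDerivAt
  -- relation for d
  have hd_rel : a + b * d = 0 := by
    have hcurve : HasDerivAt (fun c : ℝ => ((c, φ c) : ℝ × ℝ)) ((1 : ℝ), d) c₀ :=
      (hasDerivAt_id c₀).prodMk hφd
    have hψ : HasDerivAt (fun c => F (c, φ c)) (L₀ ((1 : ℝ), d)) c₀ := by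
      refine HasFDerivAt.comp_hasDerivAt_of_eq c₀ hF.hasFDerivAt hcurve ?_
      simp [hp₀def, hφc₀]
    have hψ0 : (fun c => F (c, φ c)) =ᶠ[nhds c₀] fun _ => (0:ℝ) := by
      filter_upwards [hev_sol] with c hc
      simp [hFdef, hc]
    have h0 : HasDerivAt (fun _ : ℝ => (0:ℝ)) (L₀ ((1:ℝ), d)) c₀ :=
      hψ.congr_of_eventuallyEq hψ0.symm
    have := (hasDerivAt_const c₀ (0:ℝ)).unique h0
    rw [hL₀apply] at this
    simp at this
    linarith [this]
  -- eventual equality with z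
  have hφcont : ContinuousAt φ c₀ := hφd.continuousAt
  have hev_dom : ∀ᶠ c in nhds c₀, φ c - c ∈ CatDom T := by
    have hc : ContinuousAt (fun c => φ c - c) c₀ := hφcont.sub continuousAt_id
    have : CatDom T ∈ nhds (φ c₀ - c₀) := by
      rw [hφc₀]; exact isOpen_catDom.mem_nhds hw
    exact hc.eventually_mem this
  have hev_sign : ∀ᶠ c in nhds c₀, 0 < s * φ c := by
    have hc : ContinuousAt (fun c => s * φ c) c₀ := continuousAt_const.mul hφcont
    have hval : 0 < s * φ c₀ := by rw [hφc₀]; exact hsign c₀ hc₀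
    have : Set.Ioi (0:ℝ) ∈ nhds (s * φ c₀) := isOpen_Ioi.mem_nhds hval
    exact hc.eventually_mem this
  have hev_eq : ∀ᶠ c in nhds c₀, 0 ≤ c → φ c = z c := by
    filter_upwards [hev_sol, hev_dom, hev_sign] with c h1 h2 h3 h0
    exact hsel c h0 (φ c) h2 h1 h3
  -- derivative of the φ-version of f
  have hr_at : HasDerivAt r R' w₀ := (hdiff w₀ hw).1.hasDerivAt
  have hinner : HasDerivAt (fun c => φ c - c) (d - 1) c₀ := hφd.sub (hasDerivAt_id c₀)
  have hcompr : HasDerivAt (fun c => r (φ c - c)) (R' * (d - 1)) c₀ := by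
    have := HasDerivAt.comp_of_eq c₀ hr_at hinner (by show w₀ = φ c₀ - c₀; rw [hφc₀])
    simpa [Function.comp_def] using this
  have hgfun : HasDerivAt (fun c => φ c ^ 2 + r (φ c - c) ^ 2)
      ((2:ℕ) * φ c₀ ^ 1 * d + (2:ℕ) * r (φ c₀ - c₀) ^ 1 * (R' * (d - 1))) c₀ :=
    (hφd.pow 2).add (hcompr.pow 2)
  -- value identity
  have hfi₀ : 1 + R' ^ 2 = R ^ (2 * n - 2) := hfi w₀ hw
  have hzr : z₀ * R' = R := by
    have := heq c₀ hc₀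
    rw [← hz₀def, ← hw₀def, ← hR'def, ← hRdef] at this
    exact this
  have hval : (2:ℕ) * φ c₀ ^ 1 * d + (2:ℕ) * r (φ c₀ - c₀) ^ 1 * (R' * (d - 1))
      = 2 * z₀ / ((n : ℝ) - 1) * ((n : ℝ) - R ^ (2 * n - 2)) := by
    rw [hφc₀]
    rw [show z₀ - c₀ = w₀ from hw₀def.symm]
    rw [← hRdef]
    simp only [hadef, hbdef] at hd_rel
    have hkne : (((n:ℝ) - 1) * (z₀ * R'')) ≠ 0 := mul_ne_zero hn1pos.ne' hbne
    have hmain : (((n:ℝ) - 1) * (z₀ * R'')) * ((2:ℕ) * z₀ ^ 1 * d + (2:ℕ) * R ^ 1 * (R' * (d - 1)))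
        = (((n:ℝ) - 1) * (z₀ * R'')) * (2 * z₀ / ((n : ℝ) - 1) * ((n : ℝ) - R ^ (2 * n - 2))) := by
      have hrhs : (((n:ℝ) - 1) * (z₀ * R'')) * (2 * z₀ / ((n : ℝ) - 1) * ((n : ℝ) - R ^ (2 * n - 2)))
          = (z₀ * R'') * (2 * z₀ * ((n : ℝ) - R ^ (2 * n - 2))) := by
        field_simp
      rw [hrhs]
      push_cast
      linear_combination (((n:ℝ) - 1) * (2 * z₀ + 2 * R * R')) * hd_rel
        + (-2 * ((n:ℝ) - 1) + 2 * R'' * (z₀ * R' + R)) * hzr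
        + (2 * R) * hode₀ + (-2 * z₀ ^ 2 * R'') * hfi₀
    exact mul_left_cancel₀ hkne hmain
  rw [hval] at hgfun
  constructor
  · refine (hgfun.hasDerivWithinAt).congr_of_eventuallyEq ?_ ?_
    · filter_upwards [hev_eq.filter_mono nhdsWithin_le_nhds, eventually_mem_nhdsWithin]
        with c h1 h2
      rw [h1 h2]
    · show z c₀ ^ 2 + r (z c₀ - c₀) ^ 2 = φ c₀ ^ 2 + r (φ c₀ - c₀) ^ 2
      rw [hφc₀, ← hz₀def]
  · intro hcpos
    refine hgfun.congr_of_eventuallyEq ?_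
    filter_upwards [hev_eq, eventually_ge_nhds hcpos] with c h1 h2
    rw [h1 h2]

/-- With `z₁(c) < 0 < z₂(c)` the two radial-tangency points of the
translated profile curve and `f_i(c) = z_i(c)² + r(z_i(c) − c)²` the squared distance
to the origin, each `f_i` is differentiable on `(0, ∞)` (one-sidedly at `0`) with
`f_i'(c) = (2 z_i(c)/(n−1))·(n − r(z_i(c) − c)^(2n−2))`. -/
theorem squared_radius_derivative_formula (n : ℕ) (hn : 2 ≤ n)
    (T : EReal) (r : ℝ → ℝ) (hr : IsMaxCatenoidProfile n T r)
    (z₁ z₂ : ℝ → ℝ)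
    (hdom₁ : ∀ c : ℝ, 0 ≤ c → ((z₁ c - c : ℝ) : EReal) ∈ Set.Ioo (-T) T)
    (hdom₂ : ∀ c : ℝ, 0 ≤ c → ((z₂ c - c : ℝ) : EReal) ∈ Set.Ioo (-T) T)
    (hneg : ∀ c : ℝ, 0 ≤ c → z₁ c < 0)
    (hpos : ∀ c : ℝ, 0 ≤ c → 0 < z₂ c)
    (heq₁ : ∀ c : ℝ, 0 ≤ c → z₁ c * deriv r (z₁ c - c) = r (z₁ c - c))
    (heq₂ : ∀ c : ℝ, 0 ≤ c → z₂ c * deriv r (z₂ c - c) = r (z₂ c - c))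
    (huniq : ∀ c : ℝ, 0 ≤ c → ∀ z : ℝ, ((z - c : ℝ) : EReal) ∈ Set.Ioo (-T) T →
      z * deriv r (z - c) = r (z - c) → z = z₁ c ∨ z = z₂ c)
    (f₁ f₂ : ℝ → ℝ)
    (hf₁ : f₁ = fun c => (z₁ c) ^ 2 + (r (z₁ c - c)) ^ 2)
    (hf₂ : f₂ = fun c => (z₂ c) ^ 2 + (r (z₂ c - c)) ^ 2) :
    (∀ c : ℝ, 0 < c →
      HasDerivAt f₁ (2 * z₁ c / ((n : ℝ) - 1) * ((n : ℝ) - (r (z₁ c - c)) ^ (2 * n - 2))) c) ∧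
    HasDerivWithinAt f₁
      (2 * z₁ 0 / ((n : ℝ) - 1) * ((n : ℝ) - (r (z₁ 0 - 0)) ^ (2 * n - 2))) (Set.Ici 0) 0 ∧
    (∀ c : ℝ, 0 < c →
      HasDerivAt f₂ (2 * z₂ c / ((n : ℝ) - 1) * ((n : ℝ) - (r (z₂ c - c)) ^ (2 * n - 2))) c) ∧
    HasDerivWithinAt f₂
      (2 * z₂ 0 / ((n : ℝ) - 1) * ((n : ℝ) - (r (z₂ 0 - 0)) ^ (2 * n - 2))) (Set.Ici 0) 0 := by
  subst hf₁ hf₂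
  have key₁ : ∀ c₀ : ℝ, 0 ≤ c₀ → _ :=
    fun c₀ hc₀ => cat_key hn hr (-1) z₁ hdom₁
      (fun c hc => by nlinarith [hneg c hc])
      heq₁
      (fun c hc y hy hsol hsy => by
        rcases huniq c hc y hy hsol with h | h
        · exact h
        · exfalso; nlinarith [hpos c hc])
      c₀ hc₀
  have key₂ : ∀ c₀ : ℝ, 0 ≤ c₀ → _ :=
    fun c₀ hc₀ => cat_key hn hr 1 z₂ hdom₂
      (fun c hc => by nlinarith [hpos c hc])
      heq₂
      (fun c hc y hy hsol hsy => by
        rcases huniq c hc y hy hsol with h | h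
        · exfalso; nlinarith [hneg c hc]
        · exact h)
      c₀ hc₀
  exact ⟨fun c hc => (key₁ c hc.le).2 hc, (key₁ 0 le_rfl).1,
    fun c hc => (key₂ c hc.le).2 hc, (key₂ 0 le_rfl).1⟩
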